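/- arXiv:1304.6280 — 2 statements merged into one kernel-verified Lean document; each statement's English description precedes it below -/
import Mathlib

section
/- If f is a non-erasing morphism that is strongly quasiperiodic on infinite words, then for every finite word u and every letter α, the quasiperiod of f(u α^ω) is a factor of f(α)^3 of length less than 2|f(α)|. -/
namespace QPm

variable {A : Type*}

/-- Image of a finite word under a morphism given by images of letters. -/
def applyF (f : A → List A) (w : List A) : List A := (w.map f).flatten

/-- A morphism is non-erasing if images of letters are nonempty. -/
def NonErasing (f : A → List A) : Prop := ∀ a, f a ≠ []

/-- `wpow u k` is the `k`-fold concatenation `u^k`. -/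
def wpow (u : List A) (k : ℕ) : List A := (List.replicate k u).flatten

/-- Every position of `w` is covered by an occurrence of `q` in `w`. -/
def Covers (q w : List A) : Prop :=
  ∀ i < w.length, ∃ j, j ≤ i ∧ i < j + q.length ∧ j + q.length ≤ w.length ∧
    (w.drop j).take q.length = q

/-- `w` is `q`-quasiperiodic. -/
def QP (q w : List A) : Prop := q ≠ [] ∧ w ≠ q ∧ Covers q w

def Quasiperiodic (w : List A) : Prop := ∃ q, QP q w

def Superprimitive (w : List A) : Prop := ¬ Quasiperiodic w

/-- `q` is THE quasiperiod (shortest quasiperiod) of `w`. -/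
def IsQuasiperiod (q w : List A) : Prop :=
  QP q w ∧ ∀ q', QP q' w → q.length ≤ q'.length

/-- Every position of the infinite word `x` is covered by an occurrence of `q`. -/
def InfCovers (q : List A) (x : ℕ → A) : Prop :=
  ∀ i : ℕ, ∃ j, j ≤ i ∧ i < j + q.length ∧
    ∀ t (ht : t < q.length), x (j + t) = q.get ⟨t, ht⟩

/-- The infinite word `x` is `q`-quasiperiodic. -/
def InfQP (q : List A) (x : ℕ → A) : Prop := q ≠ [] ∧ InfCovers q x

def InfQuasiperiodic (x : ℕ → A) : Prop := ∃ q, InfQP q x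

/-- `q` is THE quasiperiod (shortest quasiperiod) of the infinite word `x`. -/
def IsInfQuasiperiod (q : List A) (x : ℕ → A) : Prop :=
  InfQP q x ∧ ∀ q', InfQP q' x → q.length ≤ q'.length

/-- Image of an infinite word under a (non-erasing) morphism: the `n`-th letter
of `f(x)` is the `n`-th letter of the image of a sufficiently long prefix. -/
def mapInf (f : A → List A) (x : ℕ → A) (n : ℕ) : A :=
  (applyF f (List.ofFn (fun i : Fin (n + 1) => x i))).getD n (x 0)

/-- `f` maps every (nonempty) finite word to a quasiperiodic word. -/
def StronglyQPFin (f : A → List A) : Prop :=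
  ∀ w : List A, w ≠ [] → Quasiperiodic (applyF f w)

/-- `f` maps every infinite word to a quasiperiodic infinite word. -/
def StronglyQPInf (f : A → List A) : Prop :=
  ∀ x : ℕ → A, InfQuasiperiodic (mapInf f x)

/-- `f` maps some non-quasiperiodic finite word to a quasiperiodic word. -/
def WeaklyQPFin (f : A → List A) : Prop :=
  ∃ w : List A, ¬ Quasiperiodic w ∧ Quasiperiodic (applyF f w)

/-- `f` maps some non-quasiperiodic infinite word to a quasiperiodic word. -/
def WeaklyQPInf (f : A → List A) : Prop :=
  ∃ x : ℕ → A, ¬ InfQuasiperiodic x ∧ InfQuasiperiodic (mapInf f x)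

/-- The ultimately periodic infinite word `u v^ω` (with default letter `d`
used only when `v` is empty). -/
def ultPer (u v : List A) (d : A) : ℕ → A :=
  fun n => if h : n < u.length then u.get ⟨n, h⟩
           else v.getD ((n - u.length) % v.length) d

/-- A finite word is primitive if it is not a power `u^k` with `k ≥ 2`. -/
def Primitive (w : List A) : Prop :=
  ¬ ∃ (u : List A) (k : ℕ), 2 ≤ k ∧ w = wpow u k

/-- `k`-fold composition of the morphism `f`. -/
def iterF (f : A → List A) : ℕ → A → List A
  | 0, a => [a]
  | (k + 1), a => applyF f (iterF f k a)

lemma applyF_append (f : A → List A) (v w : List A) :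
    applyF f (v ++ w) = applyF f v ++ applyF f w := by
  simp [applyF]

lemma applyF_replicate (f : A → List A) (r : ℕ) (a : A) :
    applyF f (List.replicate r a) = wpow (f a) r := by
  simp [applyF, wpow]

lemma wpow_length (v : List A) (k : ℕ) : (wpow v k).length = k * v.length := by
  induction k with
  | zero => simp [wpow]
  | succ n ih =>
    have hs : (n+1) * v.length = n * v.length + v.length := by ring
    simp [wpow, List.replicate_succ] at ih ⊢; omega

lemma wpow_getElem (v : List A) (hv : 0 < v.length) (k i : ℕ) (hi : i < k * v.length) :
    (wpow v k)[i]'(by rw [wpow_length]; exact hi) = v[i % v.length]'(Nat.mod_lt _ hv) := by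
  induction k generalizing i with
  | zero => omega
  | succ n ih =>
    have hw : wpow v (n+1) = v ++ wpow v n := by simp [wpow, List.replicate_succ]
    rcases lt_or_ge i v.length with h1 | h1
    · have : (wpow v (n+1))[i]'(by rw [wpow_length]; exact hi) = v[i] := by
        simp only [hw]
        rw [List.getElem_append_left h1]
      rw [this]
      congr 1
      exact (Nat.mod_eq_of_lt h1).symm
    · have hlt : i - v.length < n * v.length := by
        have hs : (n+1) * v.length = n * v.length + v.length := by ring
        have hs2 : n.succ * v.length = n * v.length + v.length := Nat.succ_mul n v.length
        omega
      have : (wpow v (n+1))[i]'(by rw [wpow_length]; exact hi)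
          = (wpow v n)[i - v.length]'(by rw [wpow_length]; exact hlt) := by
        simp only [hw]
        rw [List.getElem_append_right h1]
      rw [this, ih _ hlt]
      congr 1
      conv_rhs => rw [← Nat.sub_add_cancel h1]
      rw [Nat.add_mod_right]

lemma applyF_length_ge (f : A → List A) (hf : NonErasing f) (w : List A) :
    w.length ≤ (applyF f w).length := by
  induction w with
  | nil => simp [applyF]
  | cons a t ih =>
    have : applyF f (a :: t) = f a ++ applyF f t := by simp [applyF]
    rw [this, List.length_append, List.length_cons]
    have : 0 < (f a).length := List.length_pos_iff.mpr (hf a)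
    omega

lemma ofFn_ultPer (u : List A) (α : A) (n : ℕ) (hn : u.length ≤ n + 1) :
    List.ofFn (fun i : Fin (n + 1) => ultPer u [α] α i) =
      u ++ List.replicate (n + 1 - u.length) α := by
  apply List.ext_getElem
  · simp; omega
  · intro i h1 h2
    simp only [List.getElem_ofFn, ultPer]
    rcases lt_or_ge i u.length with h | h
    · rw [List.getElem_append_left h]
      simp [h]
    · rw [List.getElem_append_right h, List.getElem_replicate]
      simp [Nat.not_lt.mpr h]

lemma letter_formula (f : A → List A) (hf : NonErasing f) (u : List A) (α : A)
    (n : ℕ) (hn : (applyF f u).length ≤ n) :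
    mapInf f (ultPer u [α] α) n =
      (f α)[(n - (applyF f u).length) % (f α).length]'
        (Nat.mod_lt _ (List.length_pos_iff.mpr (hf α))) := by
  have hp : 0 < (f α).length := List.length_pos_iff.mpr (hf α)
  have hu : u.length ≤ (applyF f u).length := applyF_length_ge f hf u
  set U := (applyF f u).length with hU
  set r := n + 1 - u.length with hr
  have key : applyF f (List.ofFn (fun i : Fin (n + 1) => ultPer u [α] α i)) =
      applyF f u ++ wpow (f α) r := by
    rw [ofFn_ultPer u α n (by omega), applyF_append, applyF_replicate]
  have hlen : n < (applyF f u ++ wpow (f α) r).length := by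
    rw [List.length_append, wpow_length]
    have : r ≤ r * (f α).length := Nat.le_mul_of_pos_right r hp
    omega
  rw [mapInf, key, List.getD_eq_getElem _ _ hlen]
  have hge : U ≤ n := hn
  rw [List.getElem_append_right hge]
  have hlt : n - U < r * (f α).length := by
    rw [List.length_append, wpow_length] at hlen; omega
  exact wpow_getElem (f α) hp r (n - U) hlt


theorem stmt9 {A : Type*} (f : A → List A) (hf : NonErasing f)
    (h : StronglyQPInf f) (u : List A) (α : A) (q : List A)
    (hq : IsInfQuasiperiod q (mapInf f (ultPer u [α] α))) :
    q <:+: wpow (f α) 3 ∧ q.length < 2 * (f α).length := by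
  obtain ⟨⟨hqne, hcov⟩, hmin⟩ := hq
  have hp : 0 < (f α).length := List.length_pos_iff.mpr (hf α)
  set p := (f α).length with hpdef
  set U := (applyF f u).length with hUdef
  set L := q.length with hLdef
  have hL : 0 < L := List.length_pos_iff.mpr hqne
  obtain ⟨j, hj1, hj2, hj3⟩ := hcov (U + L)
  have hjU : U ≤ j := by omega
  have qform : ∀ t (ht : t < L), q[t]'ht = (f α)[(j - U + t) % p]'(Nat.mod_lt _ hp) := by
    intro t ht
    have h1 := hj3 t ht
    rw [List.get_eq_getElem] at h1
    rw [← h1, letter_formula f hf u α (j + t) (by omega)]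
    congr 2; omega
  have hbound : L < 2 * p := by
    by_contra hc
    push_neg at hc
    have hq'len : (q.take (L - p)).length = L - p := by
      rw [List.length_take]; omega
    have hne' : q.take (L - p) ≠ [] := by
      apply List.ne_nil_of_length_pos; omega
    have hcov' : InfCovers (q.take (L - p)) (mapInf f (ultPer u [α] α)) := by
      intro i
      obtain ⟨j0, k1, k2, k3⟩ := hcov i
      rcases lt_or_ge i (j0 + (L - p)) with hcase | hcase
      · refine ⟨j0, k1, by rw [hq'len]; omega, fun t ht => ?_⟩
        have htL : t < L := by rw [hq'len] at ht; omega
        have : (q.take (L - p)).get ⟨t, ht⟩ = q.get ⟨t, htL⟩ := by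
          simp [List.get_eq_getElem, List.getElem_take]
        rw [this]; exact k3 t htL
      · refine ⟨j0 + p, by omega, by rw [hq'len]; omega, fun t ht => ?_⟩
        have htL : t < L - p := by rw [hq'len] at ht; exact ht
        have h2 : p + t < L := by omega
        have hx1 : mapInf f (ultPer u [α] α) (j0 + p + t) = q.get ⟨p + t, h2⟩ := by
          rw [show j0 + p + t = j0 + (p + t) from by omega]; exact k3 _ h2
        rw [hx1]
        simp only [List.get_eq_getElem, List.getElem_take]
        rw [qform _ h2, qform _ (by omega : t < L)]
        simp only [show j - U + (p + t) = (j - U + t) + p from by omega, Nat.add_mod_right]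
    have := hmin (q.take (L - p)) ⟨hne', hcov'⟩
    rw [hq'len] at this
    omega
  have hq_eq : q = ((wpow (f α) 3).drop ((j - U) % p)).take L := by
    apply List.ext_getElem
    · rw [List.length_take, List.length_drop, wpow_length]
      have := Nat.mod_lt (j - U) hp
      omega
    · intro t h1 h2
      rw [List.getElem_take, List.getElem_drop]
      have hrp : (j - U) % p < p := Nat.mod_lt _ hp
      have h3 : (j - U) % p + t < 3 * p := by omega
      rw [wpow_getElem (f α) hp 3 _ h3, qform t h1]
      congr 1; exact (Nat.mod_add_mod _ _ _).symm
  constructor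
  · rw [hq_eq]
    exact ((List.take_prefix _ _).isInfix).trans ((List.drop_suffix _ _).isInfix)
  · exact hbound


end QPm
end

section
/- Let f be a non-erasing morphism on {a,b} and u a primitive word with |u|_a ≥ 1 and |u|_b ≥ 1. If f(u) is not primitive, then f is weakly quasiperiodic on finite words and weakly quasiperiodic on infinite words. -/
namespace QPm

variable {A : Type*}

abbrev gD (l : List Bool) (i : ℕ) : Bool := l.getD i false

lemma gD_eq (l : List Bool) {i : ℕ} (h : i < l.length) : gD l i = l[i] :=
  List.getD_eq_getElem l false h

lemma gD_append (a b : List Bool) (i : ℕ) :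
    gD (a ++ b) i = if i < a.length then gD a i else gD b (i - a.length) := by
  split
  · rename_i h
    rw [gD_eq _ (by simp; omega), gD_eq _ h, List.getElem_append]
    simp [h]
  · rename_i h
    push_neg at h
    unfold gD
    rcases Nat.lt_or_ge (i - a.length) b.length with h2 | h2
    · rw [List.getD_eq_getElem _ _ (by simp; omega), List.getD_eq_getElem _ _ h2,
        List.getElem_append]
      simp [Nat.not_lt.mpr h]
    · rw [List.getD_eq_default _ _ (by simp; omega), List.getD_eq_default _ _ (by omega)]

lemma ext_gD {a b : List Bool} (hl : a.length = b.length)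
    (h : ∀ i, i < a.length → gD a i = gD b i) : a = b := by
  apply List.ext_getElem hl
  intro i h1 h2
  have := h i h1
  rwa [gD_eq _ h1, gD_eq _ (by omega)] at this

@[simp] lemma wpow_zero (u : List Bool) : wpow u 0 = [] := rfl

lemma wpow_succ (u : List Bool) (k : ℕ) : wpow u (k+1) = u ++ wpow u k := by
  simp [wpow, List.replicate_succ]

lemma wpow_one (u : List Bool) : wpow u 1 = u := by simp [wpow]

@[simp] lemma length_wpow (u : List Bool) (k : ℕ) : (wpow u k).length = k * u.length := by
  induction k with
  | zero => simp
  | succ n ih => rw [wpow_succ, List.length_append, ih]; ring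

lemma wpow_add (u : List Bool) (a b : ℕ) : wpow u (a+b) = wpow u a ++ wpow u b := by
  induction a with
  | zero => simp
  | succ n ih => rw [Nat.succ_add, wpow_succ, wpow_succ, ih, List.append_assoc]

lemma wpow_gD (u : List Bool) (k i : ℕ) (hu : u ≠ []) (h : i < k * u.length) :
    gD (wpow u k) i = gD u (i % u.length) := by
  induction k generalizing i with
  | zero => omega
  | succ n ih =>
    rw [wpow_succ, gD_append]
    split
    · rename_i h1
      rw [Nat.mod_eq_of_lt h1]
    · rename_i h1
      push_neg at h1
      have hexp : (n+1)*u.length = n*u.length + u.length := by ring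
      rw [ih _ (by omega)]
      congr 1
      have hul : 0 < u.length := List.length_pos_iff.mpr hu
      conv_rhs => rw [show i = (i - u.length) + 1 * u.length by omega]
      rw [Nat.add_mul_mod_self_right]

@[simp] lemma applyF_nil (f : Bool → List Bool) : applyF f [] = [] := rfl

lemma applyF_cons (f : Bool → List Bool) (c : Bool) (w : List Bool) :
    applyF f (c :: w) = f c ++ applyF f w := by simp [applyF]

lemma applyF_append_s15 (f : Bool → List Bool) (a b : List Bool) :
    applyF f (a ++ b) = applyF f a ++ applyF f b := by simp [applyF]

lemma applyF_singleton (f : Bool → List Bool) (c : Bool) : applyF f [c] = f c := by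
  simp [applyF]

lemma applyF_wpow (f : Bool → List Bool) (u : List Bool) (k : ℕ) :
    applyF f (wpow u k) = wpow (applyF f u) k := by
  induction k with
  | zero => simp [wpow]
  | succ n ih => rw [wpow_succ, applyF_append_s15, ih, wpow_succ]

lemma wpow_wpow (u : List Bool) (a b : ℕ) : wpow (wpow u a) b = wpow u (a * b) := by
  induction b with
  | zero => simp [wpow]
  | succ n ih => rw [wpow_succ, ih, Nat.mul_succ, Nat.add_comm, wpow_add]

lemma length_applyF_ge (f : Bool → List Bool) (hf : NonErasing f) (w : List Bool) :
    w.length ≤ (applyF f w).length := by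
  induction w with
  | nil => simp
  | cons c w ih =>
    rw [applyF_cons, List.length_append, List.length_cons]
    have : 1 ≤ (f c).length := List.length_pos_iff.mpr (hf c)
    omega

lemma applyF_ne_nil (f : Bool → List Bool) (hf : NonErasing f) {w : List Bool}
    (hw : w ≠ []) : applyF f w ≠ [] := by
  intro h
  have h1 := length_applyF_ge f hf w
  rw [h, List.length_nil] at h1
  exact hw (List.length_eq_zero_iff.mp (by omega))

lemma applyF_prefix (f : Bool → List Bool) {a b : List Bool} (h : a <+: b) :
    applyF f a <+: applyF f b := by
  obtain ⟨t, rfl⟩ := h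
  exact ⟨applyF f t, (applyF_append_s15 f a t).symm⟩

lemma length_applyF_count (f : Bool → List Bool) (w : List Bool) :
    (applyF f w).length
      = w.count true * (f true).length + w.count false * (f false).length := by
  induction w with
  | nil => simp
  | cons c w ih =>
    rw [applyF_cons, List.length_append, ih]
    cases c <;> simp [List.count_cons] <;> ring

/-- commuting words are powers of a common word -/
lemma comm_pow : ∀ n (X Y : List Bool), X.length + Y.length ≤ n → X ++ Y = Y ++ X →
    ∃ t a b, X = wpow t a ∧ Y = wpow t b := by
  intro n
  induction n with
  | zero =>
    intro X Y hl _
    have hx : X = [] := List.length_eq_zero_iff.mp (by omega)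
    have hy : Y = [] := List.length_eq_zero_iff.mp (by omega)
    exact ⟨[], 0, 0, by simp [hx, wpow], by simp [hy, wpow]⟩
  | succ n ih =>
    intro X Y hl hcomm
    rcases eq_or_ne X [] with rfl | hX
    · exact ⟨Y, 0, 1, by simp [wpow], (wpow_one Y).symm⟩
    rcases eq_or_ne Y [] with rfl | hY
    · exact ⟨X, 1, 0, (wpow_one X).symm, by simp [wpow]⟩
    have hXpos : 0 < X.length := List.length_pos_iff.mpr hX
    have hYpos : 0 < Y.length := List.length_pos_iff.mpr hY
    rcases Nat.le_total X.length Y.length with hle | hle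
    · have hpre : X <+: Y := by
        apply List.prefix_of_prefix_length_le (l₃ := Y ++ X) ⟨Y, hcomm⟩
          (List.prefix_append Y X) hle
      obtain ⟨Z, rfl⟩ := hpre
      have hcomm2 : X ++ Z = Z ++ X := by
        have : X ++ (X ++ Z) = X ++ (Z ++ X) := by
          simp only [← List.append_assoc]
          simpa [List.append_assoc] using hcomm
        exact List.append_cancel_left this
      obtain ⟨t, a, b, hXt, hZt⟩ := ih X Z (by simp at hl ⊢; omega) hcomm2
      exact ⟨t, a, a + b, hXt, by rw [wpow_add, hXt, hZt]⟩
    · have hpre : Y <+: X := by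
        apply List.prefix_of_prefix_length_le (l₃ := X ++ Y) ⟨X, hcomm.symm⟩
          (List.prefix_append X Y) hle
      obtain ⟨Z, rfl⟩ := hpre
      have hcomm2 : Y ++ Z = Z ++ Y := by
        have : Y ++ (Y ++ Z) = Y ++ (Z ++ Y) := by
          simp only [← List.append_assoc]
          simpa [List.append_assoc] using hcomm.symm
        exact List.append_cancel_left this
      obtain ⟨t, a, b, hYt, hZt⟩ := ih Y Z (by simp at hl ⊢; omega) hcomm2
      exact ⟨t, a + b, a, by rw [wpow_add, hYt, hZt], hYt⟩

/-- one-letter rotation auxiliary identity -/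
lemma rot1_aux (c : Bool) (W : List Bool) (k : ℕ) :
    [c] ++ wpow (W ++ [c]) k = wpow (c :: W) k ++ [c] := by
  induction k with
  | zero => simp [wpow]
  | succ n ih =>
    rw [wpow_succ, wpow_succ]
    calc [c] ++ ((W ++ [c]) ++ wpow (W ++ [c]) n)
        = (c :: W) ++ ([c] ++ wpow (W ++ [c]) n) := by simp
      _ = (c :: W) ++ (wpow (c :: W) n ++ [c]) := by rw [ih]
      _ = ((c :: W) ++ wpow (c :: W) n) ++ [c] := by simp

lemma rot1 (c : Bool) (T V : List Bool) (k : ℕ) (h : c :: T = wpow V k) (hV : V ≠ []) :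
    ∃ V', T ++ [c] = wpow V' k ∧ V'.length = V.length := by
  rcases Nat.eq_zero_or_pos k with rfl | hk
  · simp [wpow] at h
  obtain ⟨v0, W, rfl⟩ : ∃ v0 W, V = v0 :: W := by
    cases V with | nil => exact absurd rfl hV | cons a l => exact ⟨a, l, rfl⟩
  have hv0 : c = v0 := by
    obtain ⟨k', rfl⟩ := Nat.exists_eq_add_of_le hk
    rw [Nat.add_comm, wpow_succ] at h
    have := congrArg (fun l => l.head?) h
    simpa using this
  subst hv0
  refine ⟨W ++ [c], ?_, by simp⟩
  have : [c] ++ (T ++ [c]) = [c] ++ wpow (W ++ [c]) k := by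
    rw [rot1_aux]
    simpa using congrArg (fun l => l ++ [c]) h
  exact List.append_cancel_left this

/-- rotation of a k-th power is a k-th power -/
lemma rot_pow : ∀ (A B V : List Bool) (k : ℕ), 2 ≤ k → A ++ B = wpow V k →
    ∃ V', B ++ A = wpow V' k ∧ V'.length = V.length := by
  intro A
  induction A with
  | nil => intro B V k _ h; exact ⟨V, by simpa using h, rfl⟩
  | cons c A' ih =>
    intro B V k hk h
    have hV : V ≠ [] := by
      intro hVe
      subst hVe
      simp [wpow] at h
    obtain ⟨V', h1, h2⟩ := rot1 c (A' ++ B) V k (by simpa using h) hV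
    obtain ⟨V'', h3, h4⟩ := ih (B ++ [c]) V' k hk (by simpa using h1)
    exact ⟨V'', by simpa using h3, by omega⟩

/-- no nonempty proper border -/
def Unbordered (l : List Bool) : Prop :=
  ∀ d, 0 < d → d < l.length → ∃ s, s < l.length - d ∧ gD l s ≠ gD l (d + s)

lemma lex_append_le {A B D : List Bool} (h : A ++ B ≤ A ++ D) : B ≤ D := by
  induction A with
  | nil => simpa using h
  | cons c A ih =>
    apply ih
    by_contra hlt
    push_neg at hlt
    exact absurd h (by simp only [not_le, List.cons_append]; exact List.Lex.cons hlt)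

lemma lex_append_lt {C A : List Bool} (h : C < A) (hlen : C.length = A.length)
    (D B : List Bool) : C ++ D < A ++ B := by
  have h' : List.Lex (· < ·) C A := h
  clear h
  induction h' generalizing D B with
  | nil => simp at hlen
  | @cons a l₁ l₂ h ih =>
    exact List.Lex.cons (ih (by simpa using hlen) D B)
  | @rel a₁ l₁ a₂ l₂ h =>
    exact List.Lex.rel h

lemma rotate_isRot (u : List Bool) (n : ℕ) : u ~r u.rotate n := ⟨n, rfl⟩

/-- existence of an unbordered Lyndon rotation starting with `false` -/
lemma exists_unbordered (u : List Bool) (hu : Primitive u)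
    (ht : 0 < u.count true) (hf : 0 < u.count false) :
    ∃ l : List Bool, u ~r l ∧ Unbordered l ∧ 2 ≤ l.length ∧
      gD l 0 = false ∧ gD l (l.length - 1) = true := by
  have hlen2 : 2 ≤ u.length := by
    have h1 : u.count true ≤ u.length := List.count_le_length
    have h2 : u.count false ≤ u.length := List.count_le_length
    rcases Nat.lt_or_ge u.length 2 with h | h
    · interval_cases hl : u.length
      · simp [List.length_eq_zero_iff.mp hl] at ht
      · obtain ⟨c, rfl⟩ := List.length_eq_one_iff.mp hl
        cases c <;> simp_all
    · exact h
  have hup : 0 < u.length := by omega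
  -- minimal rotation
  obtain ⟨i₀, -, hmin0⟩ := Finset.exists_min_image (Finset.range (u.length + 1))
    (fun i => u.rotate i) ⟨0, Finset.mem_range.mpr (by omega)⟩
  set l := u.rotate i₀ with hl
  have hrot : u ~r l := rotate_isRot u i₀
  have hlenl : l.length = u.length := List.length_rotate u i₀
  have hmin : ∀ v, u ~r v → l ≤ v := by
    rintro v ⟨n, rfl⟩
    have hm := hmin0 (n % u.length)
      (Finset.mem_range.mpr (by have := Nat.mod_lt n hup; omega))
    rw [List.rotate_mod] at hm
    exact hm
  have hminl : ∀ d, l ≤ l.rotate d := fun d => hmin _ (hrot.trans (rotate_isRot l d))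
  clear hmin0 hl
  have hlprim : Primitive l := by
    intro ⟨t, k, hk, hpow⟩
    have hdec : u.drop (i₀ % u.length) ++ u.take (i₀ % u.length) = l := by
      rw [← List.rotate_eq_drop_append_take (le_of_lt (Nat.mod_lt _ hup)),
        List.rotate_mod]
    apply hu
    rw [hpow] at hdec
    obtain ⟨V', hV', -⟩ := rot_pow _ _ _ _ hk hdec
    rw [List.take_append_drop] at hV'
    exact ⟨V', k, hk, hV'⟩
  clear_value l
  -- l starts with false
  have hhead : gD l 0 = false := by
    by_contra hh
    have hmemf : false ∈ l := by
      have : 0 < l.count false := by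
        have := (hrot.perm).count_eq false
        omega
      exact List.count_pos_iff.mp this
    obtain ⟨j, hj, hjf⟩ := List.mem_iff_getElem.mp hmemf
    have hv : l ~r l.rotate j := rotate_isRot l j
    have hle := hmin _ (hrot.trans hv)
    have hvd : l.rotate j = l.drop j ++ l.take j :=
      List.rotate_eq_drop_append_take (le_of_lt hj)
    -- first char of rotate j is false, first char of l is true
    have hlpos : 0 < l.length := by omega
    obtain ⟨a, l', rfl⟩ : ∃ a l', l = a :: l' := by
      cases l with
      | nil => simp at hlpos
      | cons a l' => exact ⟨a, l', rfl⟩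
    have ha : a = true := by
      have h0 : gD (a :: l') 0 = a := by simp [gD]
      rw [h0] at hh
      simpa using hh
    obtain ⟨b, v', hv'⟩ : ∃ b v', (a :: l').rotate j = b :: v' := by
      have : ((a :: l').rotate j).length = (a :: l').length := List.length_rotate _ _
      cases hrj : (a :: l').rotate j with
      | nil => rw [hrj] at this; simp at this
      | cons b v' => exact ⟨b, v', rfl⟩
    have hb : b = false := by
      have hdrop : (a :: l').drop j = (a :: l')[j] :: (a :: l').drop (j+1) :=
        List.drop_eq_getElem_cons hj
      have hthis : (a :: l').rotate j
          = (a :: l')[j] :: ((a :: l').drop (j+1) ++ (a :: l').take j) := by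
        rw [hvd, hdrop]; rfl
      rw [hv', hjf] at hthis
      injection hthis
    rw [hv'] at hle
    subst ha hb
    exact absurd hle (by simp only [not_le]; exact List.Lex.rel (by simp))
  -- unbordered
  have hunb : Unbordered l := by
    intro d hd hdl
    by_contra hnb
    push_neg at hnb
    -- border: prefix of length L-d equals suffix from d
    have hTeq : l.take (l.length - d) = l.drop d := by
      apply ext_gD
      · rw [List.length_take, List.length_drop]; omega
      · intro i hi
        rw [List.length_take] at hi
        have hi' : i < l.length - d := by omega
        have h1 : gD (l.take (l.length - d)) i = gD l i := by
          rw [gD_eq _ (by rw [List.length_take]; omega), gD_eq _ (by omega),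
            List.getElem_take]
        have h2 : gD (l.drop d) i = gD l (d + i) := by
          rw [gD_eq _ (by rw [List.length_drop]; omega), gD_eq _ (by omega),
            List.getElem_drop]
        rw [h1, h2]
        exact hnb i hi'
    set T := l.drop d with hT
    set S := l.drop (l.length - d) with hS
    set X := l.take d with hX
    have hlTS : l = T ++ S := by
      conv_lhs => rw [← List.take_append_drop (l.length - d) l]
      rw [hTeq]
    have hlXT : l = X ++ T := by
      conv_lhs => rw [← List.take_append_drop d l]
    have hRd : l.rotate d = T ++ X := List.rotate_eq_drop_append_take (by omega)
    have hRLd : l.rotate (l.length - d) = S ++ T := by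
      rw [List.rotate_eq_drop_append_take (by omega), hTeq]
    have hSX : S ≤ X := by
      apply lex_append_le (A := T)
      rw [← hlTS, ← hRd]
      exact hminl d
    have hXS : X ≤ S := by
      by_contra hxs
      push_neg at hxs
      have hlenSX : S.length = X.length := by
        rw [hS, hX, List.length_drop, List.length_take]; omega
      have hlt : S ++ T < X ++ T := lex_append_lt hxs hlenSX T T
      have h2 := hminl (l.length - d)
      rw [hRLd, hlXT] at h2
      exact absurd (lt_of_le_of_lt h2 hlt) (lt_irrefl _)
    have hXeqS : X = S := le_antisymm hXS hSX
    -- rotate d l = T ++ X = T ++ S = l, so X ++ T = T ++ X → commute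
    have hcomm : X ++ T = T ++ X := by
      rw [← hlXT, hXeqS, hlTS]
    obtain ⟨t, a, b, hXt, hTt⟩ := comm_pow (X.length + T.length) X T le_rfl hcomm
    have htne : t ≠ [] := by
      intro rfl'
      rw [rfl'] at hXt hTt
      have : l.length = 0 := by
        rw [hlXT, List.length_append, hXt, hTt]; simp
      omega
    have htpos : 0 < t.length := List.length_pos_iff.mpr htne
    have hXlen : X.length = a * t.length := by rw [hXt]; simp
    have hTlen : T.length = b * t.length := by rw [hTt]; simp
    have hXlend : X.length = d := by rw [hX, List.length_take]; omega
    have hta : 0 < a := by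
      by_contra h0
      push_neg at h0
      interval_cases a
      rw [Nat.zero_mul] at hXlen
      omega
    have hLl : l.length = (a + b) * t.length := by
      rw [hlXT, List.length_append, hXlen, hTlen]; ring
    have hab2 : 2 ≤ a + b := by
      by_contra hc
      push_neg at hc
      have hb0 : b = 0 := by omega
      have ha1 : a = 1 := by omega
      subst hb0 ha1
      simp at hLl hXlen
      omega
    exact hlprim ⟨t, a + b, hab2, by rw [hlXT, hXt, hTt, ← wpow_add]⟩
  -- last char
  have hlast : gD l (l.length - 1) = true := by
    obtain ⟨s, hs, hne⟩ := hunb (l.length - 1) (by omega) (by omega)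
    have hs0 : s = 0 := by omega
    subst hs0
    rw [hhead] at hne
    have : l.length - 1 + 0 = l.length - 1 := by omega
    rw [Nat.add_zero] at hne
    revert hne
    cases gD l (l.length - 1) <;> simp
  exact ⟨l, hrot, hunb, by omega, hhead, hlast⟩

lemma wpow_map (g : Bool → Bool) (u : List Bool) (k : ℕ) :
    (wpow u k).map g = wpow (u.map g) k := by
  induction k with
  | zero => simp [wpow]
  | succ n ih => rw [wpow_succ, wpow_succ, List.map_append, ih]

lemma map_not_not (u : List Bool) : (u.map not).map not = u := by
  induction u with
  | nil => rfl
  | cons a l ih => simp [ih]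

lemma primitive_map_not {u : List Bool} (hu : Primitive u) : Primitive (u.map not) := by
  rintro ⟨t, k, hk, hpow⟩
  apply hu
  refine ⟨t.map not, k, hk, ?_⟩
  rw [← map_not_not u, hpow, wpow_map]

lemma count_map_not (u : List Bool) (c : Bool) : (u.map not).count c = u.count (!c) := by
  induction u with
  | nil => simp
  | cons a l ih =>
    simp only [List.map_cons, List.count_cons, ih]
    congr 1
    cases a <;> cases c <;> simp

lemma gD_map_not (l : List Bool) (i : ℕ) (h : i < l.length) :
    gD (l.map not) i = !(gD l i) := by
  rw [gD_eq _ (by simpa using h), gD_eq _ h, List.getElem_map]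

lemma unbordered_map_not {l : List Bool} (h : Unbordered l) : Unbordered (l.map not) := by
  intro d hd hdl
  rw [List.length_map] at hdl
  obtain ⟨s, hs, hne⟩ := h d hd hdl
  refine ⟨s, by simpa using hs, ?_⟩
  rw [gD_map_not _ _ (by omega), gD_map_not _ _ (by omega)]
  simpa using hne

lemma exists_unbordered_ending (u : List Bool) (hu : Primitive u)
    (ht : 0 < u.count true) (hf : 0 < u.count false) (c : Bool) :
    ∃ l : List Bool, u ~r l ∧ Unbordered l ∧ 2 ≤ l.length ∧
      gD l 0 = !c ∧ gD l (l.length - 1) = c := by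
  cases c
  · obtain ⟨l', hrot, hunb, hlen, hh, hl⟩ := exists_unbordered (u.map not)
      (primitive_map_not hu) (by rw [count_map_not]; simpa using hf)
      (by rw [count_map_not]; simpa using ht)
    obtain ⟨n, hn⟩ := hrot
    refine ⟨l'.map not, ⟨n, ?_⟩, unbordered_map_not hunb, by simpa using hlen, ?_, ?_⟩
    · rw [← hn, ← List.map_rotate, map_not_not]
    · rw [gD_map_not _ _ (by omega), hh]
    · rw [gD_map_not _ _ (by simp; omega)]
      rw [List.length_map, hl]
      rfl
  · obtain ⟨l, h1, h2, h3, h4, h5⟩ := exists_unbordered u hu ht hf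
    exact ⟨l, h1, h2, h3, by simpa using h4, h5⟩

lemma covers_match {q w : List Bool} {j : ℕ} (hle : j + q.length ≤ w.length)
    (hm : (w.drop j).take q.length = q) :
    ∀ t, t < q.length → gD w (j + t) = gD q t := by
  intro t ht
  have h2 : gD (List.take q.length (List.drop j w)) t = gD w (j + t) := by
    rw [gD_eq _ (show t < (List.take q.length (List.drop j w)).length by
        simp only [List.length_take, List.length_drop]; omega),
      List.getElem_take, List.getElem_drop, ← gD_eq _ (by omega)]
  rw [← h2, hm]

lemma match_covers {q w : List Bool} {j : ℕ} (hle : j + q.length ≤ w.length)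
    (hm : ∀ t, t < q.length → gD w (j + t) = gD q t) :
    (w.drop j).take q.length = q := by
  apply ext_gD
  · simp [List.length_take, List.length_drop]; omega
  · intro i hi
    have hi' : i < q.length := by
      simp only [List.length_take, List.length_drop] at hi; omega
    rw [gD_eq _ hi, List.getElem_take, List.getElem_drop, ← gD_eq _ (by omega)]
    exact hm i hi'

/-- the finite witness: `l ++ [first letter of l]` is not quasiperiodic -/
lemma nonQP_unb (l : List Bool) (hunb : Unbordered l) (h2 : 2 ≤ l.length) :
    ¬ Quasiperiodic (l ++ [gD l 0]) := by
  rintro ⟨q, hq, hwq, hcov⟩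
  set w := l ++ [gD l 0] with hw
  have hwlen : w.length = l.length + 1 := by simp [hw]
  have hqpos : 0 < q.length := List.length_pos_iff.mpr hq
  -- prefix match
  obtain ⟨j0, hj0, hr0, hle0, hm0⟩ := hcov 0 (by omega)
  have hj00 : j0 = 0 := by omega
  subst hj00
  have hpre : ∀ t, t < q.length → gD w t = gD q t := by
    have := covers_match hle0 hm0
    simpa using this
  -- suffix match
  obtain ⟨j1, hj1, hr1, hle1, hm1⟩ := hcov (w.length - 1) (by omega)
  have hj1e : j1 = w.length - q.length := by omega
  subst hj1e
  have hsuf : ∀ t, t < q.length → gD w (w.length - q.length + t) = gD q t :=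
    covers_match hle1 hm1
  -- q has both the same length as w, or is a border
  rcases Nat.lt_or_ge q.length w.length with hql | hql
  · -- border of w
    rcases Nat.eq_or_lt_of_le hqpos with hq1 | hq2
    · -- single letter
      have hother : gD w (l.length - 1) ≠ gD q 0 := by
        have h01 : gD w 0 = gD l 0 := by
          rw [hw, gD_append, if_pos (by omega : (0:ℕ) < l.length)]
        have hl1 : gD w (l.length - 1) = gD l (l.length - 1) := by
          rw [hw, gD_append]; simp only [if_pos (by omega : l.length - 1 < l.length)]
        have hne : gD l 0 ≠ gD l (l.length - 1) := by
          obtain ⟨s, hs, hne⟩ := hunb (l.length - 1) (by omega) (by omega)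
          have : s = 0 := by omega
          subst this
          simpa using hne
        rw [hl1, ← hpre 0 (by omega), h01]
        exact fun hcon => hne hcon.symm
      obtain ⟨j2, hj2, hr2, hle2, hm2⟩ := hcov (l.length - 1) (by omega)
      have hj2e : j2 = l.length - 1 := by omega
      subst hj2e
      have := covers_match hle2 hm2 0 (by omega)
      rw [Nat.add_zero] at this
      exact hother this
    · -- 2 ≤ q.length : border of l, contradiction with unbordered
      set d := w.length - q.length with hd
      have hd1 : 1 ≤ d := by omega
      have hdL : d < l.length := by omega
      apply absurd (hunb d (by omega) hdL)
      push_neg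
      intro s hs
      have h1 : gD l s = gD w s := by
        rw [hw, gD_append, if_pos (by omega : s < l.length)]
      have h2 : gD l (d + s) = gD w (d + s) := by
        rw [hw, gD_append, if_pos (by omega : d + s < l.length)]
      rw [h1, h2, hpre s (by omega), hsuf s (by omega)]
  · -- q.length = w.length → q = w
    have hql' : q.length ≤ w.length := by omega
    have heq : q.length = w.length := by omega
    apply hwq
    apply (ext_gD (by omega) ?_).symm
    intro i hi
    exact (hpre i (by omega)).symm

lemma prefix_gD {a b : List Bool} (h : a <+: b) {i : ℕ} (hi : i < a.length) :
    gD a i = gD b i := by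
  rw [gD_eq _ hi, gD_eq _ (lt_of_lt_of_le hi h.length_le), h.getElem hi]

lemma gD_take (l : List Bool) (n i : ℕ) (hi : i < n) (hil : i < l.length) :
    gD (l.take n) i = gD l i := by
  rw [gD_eq _ (by simp [List.length_take]; omega), gD_eq _ hil, List.getElem_take]

/-- A word that looks like a prefix of `V^ω` and is long enough is quasiperiodic. -/
lemma pow_like_QP (V W : List Bool) (hV : V ≠ [])
    (hlen : V.length + W.length % V.length < W.length)
    (hW : ∀ i, i < W.length → gD W i = gD V (i % V.length)) : Quasiperiodic W := by
  have hVp : 0 < V.length := List.length_pos_iff.mpr hV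
  set r := W.length % V.length with hr
  set Q := W.take (V.length + r) with hQ
  have hrV : r < V.length := Nat.mod_lt _ hVp
  have hQlen : Q.length = V.length + r := by
    rw [hQ, List.length_take]; omega
  have hQW : ∀ t, t < Q.length → gD Q t = gD V (t % V.length) := by
    intro t ht
    rw [hQ, gD_take _ _ _ (by omega) (by omega)]
    exact hW t (by omega)
  refine ⟨Q, ?_, ?_, ?_⟩
  · intro hQe
    rw [hQe] at hQlen
    simp at hQlen
    omega
  · intro hWQ
    have := congrArg List.length hWQ
    rw [hQlen] at this
    omega
  · intro i hi
    -- m' := W.length / V.length ≥ 2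
    have hm2 : 2 ≤ W.length / V.length := by
      rcases Nat.lt_or_ge (W.length / V.length) 2 with hc | hc
      · exfalso
        have := Nat.div_add_mod W.length V.length
        interval_cases hd : (W.length / V.length) <;> omega
      · exact hc
    set m' := W.length / V.length with hm'
    have hNd : m' * V.length + r = W.length := by
      rw [hm', hr, Nat.mul_comm]; exact Nat.div_add_mod _ _
    set s := min (i / V.length) (m' - 1) with hs
    refine ⟨s * V.length, ?_, ?_, ?_, ?_⟩
    · rcases Nat.le_total (i / V.length) (m' - 1) with h | h
      · rw [hs, min_eq_left h]
        exact Nat.div_mul_le_self i V.length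
      · rw [hs, min_eq_right h]
        calc (m' - 1) * V.length ≤ (i / V.length) * V.length :=
              Nat.mul_le_mul_right _ h
          _ ≤ i := Nat.div_mul_le_self i V.length
    · rw [hQlen]
      rcases Nat.le_total (i / V.length) (m' - 1) with h | h
      · rw [hs, min_eq_left h]
        have hdm : i / V.length * V.length + i % V.length = i := by
          rw [Nat.mul_comm]; exact Nat.div_add_mod i V.length
        have hml : i % V.length < V.length := Nat.mod_lt i hVp
        omega
      · rw [hs, min_eq_right h]
        have h1 : (m' - 1) * V.length + V.length = m' * V.length := by
          have : 1 ≤ m' := by omega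
          calc (m' - 1) * V.length + V.length = ((m' - 1) + 1) * V.length := by ring
            _ = m' * V.length := by congr 1; omega
        omega
    · rw [hQlen]
      have hs1 : s ≤ m' - 1 := min_le_right _ _
      have : s * V.length + V.length ≤ m' * V.length := by
        calc s * V.length + V.length = (s + 1) * V.length := by ring
          _ ≤ m' * V.length := Nat.mul_le_mul_right _ (by omega)
      omega
    · apply match_covers
      · rw [hQlen]
        have hs1 : s ≤ m' - 1 := min_le_right _ _
        have : s * V.length + V.length ≤ m' * V.length := by
          calc s * V.length + V.length = (s + 1) * V.length := by ring
            _ ≤ m' * V.length := Nat.mul_le_mul_right _ (by omega)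
        omega
      · intro t ht
        rw [hQW t ht]
        have hb : s * V.length + t < W.length := by
          rw [hQlen] at ht
          have hs1 : s ≤ m' - 1 := min_le_right _ _
          have : s * V.length + V.length ≤ m' * V.length := by
            calc s * V.length + V.length = (s + 1) * V.length := by ring
              _ ≤ m' * V.length := Nat.mul_le_mul_right _ (by omega)
          omega
        rw [hW _ hb, Nat.add_comm (s * V.length) t, Nat.add_mul_mod_self_right]

/-- image of the finite witness is quasiperiodic -/
lemma finite_witness_QP (f : Bool → List Bool) (l V : List Bool) (k : ℕ)
    (hk : 2 ≤ k) (hV : V ≠ []) (himg : applyF f l = wpow V k) (hl2 : 2 ≤ l.length) :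
    Quasiperiodic (applyF f (l ++ [gD l 0])) := by
  have hVp : 0 < V.length := List.length_pos_iff.mpr hV
  obtain ⟨a, l', rfl⟩ : ∃ a l', l = a :: l' := by
    cases l with
    | nil => simp at hl2
    | cons a l' => exact ⟨a, l', rfl⟩
  have hg0 : gD (a :: l') 0 = a := by simp [gD]
  rw [hg0, applyF_append_s15, himg, applyF_singleton]
  set P := f a with hP
  have hPpre : P <+: wpow V k := by
    rw [← himg, applyF_cons]
    exact ⟨applyF f l', rfl⟩
  have hPle : P.length ≤ k * V.length := by
    have := hPpre.length_le
    simpa using this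
  set W := wpow V k ++ P with hW
  have hWlen : W.length = k * V.length + P.length := by simp [hW]
  apply pow_like_QP V _ hV
  · -- length condition
    rw [hWlen]
    have hmod : (k * V.length + P.length) % V.length = P.length % V.length := by
      rw [Nat.add_comm]
      exact Nat.add_mul_mod_self_right ..
    rw [hmod]
    have h2k : 2 * V.length ≤ k * V.length := Nat.mul_le_mul_right _ hk
    have : P.length % V.length ≤ P.length := Nat.mod_le _ _
    omega
  · intro i hi
    rw [hW, gD_append]
    split
    · rename_i h
      rw [wpow_gD _ _ _ hV (by simpa using h)]
    · rename_i h
      push_neg at h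
      simp only [length_wpow] at h
      have hiP : i - k * V.length < P.length := by
        rw [hWlen] at hi; omega
      simp only [length_wpow]
      rw [prefix_gD hPpre hiP, wpow_gD _ _ _ hV (by omega)]
      congr 1
      conv_rhs => rw [show i = (i - k * V.length) + k * V.length by omega]
      exact (Nat.add_mul_mod_self_right ..).symm

lemma get_gD (q : List Bool) (t : ℕ) (ht : t < q.length) : q.get ⟨t, ht⟩ = gD q t := by
  rw [List.get_eq_getElem, gD_eq _ ht]

lemma gD_rotate (l : List Bool) (r s : ℕ) (hr : r < l.length) (hs : s < l.length) :
    gD (l.rotate r) s = gD l ((r + s) % l.length) := by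
  rw [List.rotate_eq_drop_append_take (le_of_lt hr), gD_append, List.length_drop]
  split
  · rename_i h
    rw [Nat.mod_eq_of_lt (by omega)]
    rw [gD_eq _ (by rw [List.length_drop]; omega), gD_eq _ (by omega), List.getElem_drop]
  · rename_i h
    push_neg at h
    have hmod : (r + s) % l.length = r + s - l.length := by
      rw [Nat.mod_eq_sub_mod (by omega), Nat.mod_eq_of_lt (by omega)]
    rw [hmod, gD_take _ _ _ (by omega) (by omega)]
    congr 1
    omega

lemma count_single_ne {a c : Bool} (h : a ≠ c) : List.count c [a] = 0 := by
  cases a <;> cases c <;> simp_all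

lemma count_single_eq (c : Bool) : List.count c [c] = 1 := by
  cases c <;> simp

lemma ultPer_lt (l : List Bool) {n : ℕ} (h : n < l.dropLast.length) :
    ultPer l.dropLast l false n = gD l n := by
  unfold ultPer
  rw [dif_pos h, get_gD]
  exact prefix_gD (List.dropLast_prefix l) h

lemma ultPer_ge (l : List Bool) {n : ℕ} (hl : l ≠ []) (h : l.dropLast.length ≤ n) :
    ultPer l.dropLast l false n = gD l ((n - (l.length - 1)) % l.length) := by
  unfold ultPer
  rw [dif_neg (by omega), List.length_dropLast]

-- THE KEY LEMMA: the infinite witness is not quasiperiodic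
lemma x_nonQP (l : List Bool) (hunb : Unbordered l) (h2 : 2 ≤ l.length) :
    ¬ InfQuasiperiodic (ultPer l.dropLast l false) := by
  rintro ⟨Q, hQne, hcov⟩
  have hLpos : 0 < l.length := by omega
  have hlne : l ≠ [] := by
    intro h
    rw [h] at h2
    simp at h2
  set L := l.length with hL
  clear_value L
  have hπlen : l.dropLast.length = L - 1 := by
    rw [hL]
    exact List.length_dropLast
  set x := ultPer l.dropLast l false with hx
  clear_value x
  have hx1 : ∀ n, n < L - 1 → x n = gD l n := by
    intro n hn
    rw [hx]
    exact ultPer_lt l (by omega)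
  have hx2 : ∀ n, L - 1 ≤ n → x n = gD l ((n - (L - 1)) % L) := by
    intro n hn
    rw [hx, ultPer_ge l hlne (by omega), hL]
  have hQpos : 0 < Q.length := List.length_pos_iff.mpr hQne
  -- occurrence at 0 : Q is a prefix of x
  obtain ⟨j0, hj00, hj0r, hm0⟩ := hcov 0
  have hj0z : j0 = 0 := by omega
  subst hj0z
  have hQx : ∀ t, t < Q.length → x t = gD Q t := by
    intro t ht
    rw [← get_gD Q t ht]
    simpa using hm0 t ht
  -- the index i (≈ ⌈|Q|/L⌉)
  set i := (Q.length + L - 1) / L with hi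
  clear_value i
  have hdm : L * ((Q.length + L - 1) / L) + (Q.length + L - 1) % L = Q.length + L - 1 :=
    Nat.div_add_mod _ _
  have hml : (Q.length + L - 1) % L < L := Nat.mod_lt _ hLpos
  have hiL : i * L = L * ((Q.length + L - 1) / L) := by rw [hi, Nat.mul_comm]
  have hiQ : Q.length ≤ i * L := by omega
  have hi1 : 1 ≤ i := by
    rcases Nat.eq_zero_or_pos i with h0 | h
    · rw [h0, Nat.zero_mul] at hiQ; omega
    · exact h
  have hiLL : L ≤ i * L := by
    calc L = 1 * L := (Nat.one_mul L).symm
      _ ≤ i * L := Nat.mul_le_mul_right L hi1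
  -- the uncovered position
  set z := i * L + L - 2 with hz
  clear_value z
  obtain ⟨j, hjz, hreach, hmz⟩ := hcov z
  have hmz' : ∀ t, t < Q.length → x (j + t) = gD Q t := by
    intro t ht
    rw [← get_gD Q t ht]
    exact hmz t ht
  rcases Nat.lt_or_ge j (L - 1) with hjcase | hjcase
  · -- j ≤ L - 2 : cannot reach z
    omega
  · -- tail occurrence
    set t' := j - (L - 1) with ht'
    clear_value t'
    rcases Nat.lt_or_ge Q.length L with hQL | hQL
    · -- short Q : border contradiction
      have hieq : i = 1 := by
        have h1 : Q.length + L - 1 < 2 * L := by omega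
        have h2' : (Q.length + L - 1) / L < 2 := by
          rw [Nat.div_lt_iff_lt_mul hLpos]
          omega
        have h3 : 1 ≤ (Q.length + L - 1) / L := by
          rcases Nat.eq_zero_or_pos ((Q.length + L - 1) / L) with h0 | h
          · rw [h0, Nat.mul_zero] at hdm; omega
          · exact h
        omega
      rw [hieq, Nat.one_mul] at hz
      have ht'L : t' ≤ L - 1 := by omega
      have ht'1 : 1 ≤ t' := by omega
      obtain ⟨s, hs, hne⟩ := hunb t' (by omega) (by omega)
      apply hne
      have hsQ : s < Q.length := by omega
      have hA : gD l s = x s := (hx1 s (by omega)).symm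
      have hB : x s = gD Q s := hQx s hsQ
      have hC : x (j + s) = gD Q s := hmz' s hsQ
      have hD : x (j + s) = gD l ((t' + s) % L) := by
        rw [hx2 (j + s) (by omega)]
        congr 2
        omega
      rw [hA, hB, ← hC, hD, Nat.mod_eq_of_lt (by omega)]
    · -- long Q : counting contradiction
      set c := gD l (L - 1) with hc
      have hheadne : gD l 0 ≠ c := by
        obtain ⟨s, hs, hne⟩ := hunb (L - 1) (by omega) (by omega)
        have hs0 : s = 0 := by omega
        subst hs0
        rw [Nat.add_zero] at hne
        exact hne
      set r := t' % L with hr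
      clear_value r
      have hrL : r < L := by
        rw [hr]
        exact Nat.mod_lt _ hLpos
      -- the two windows of length L are equal
      have hwin : l.dropLast ++ [gD l 0] = l.rotate r := by
        apply ext_gD
        · rw [List.length_append, List.length_rotate, hπlen, List.length_singleton]
          omega
        · intro idx hidx
          have hidxL : idx < L := by
            rw [List.length_append, hπlen, List.length_singleton] at hidx
            omega
          have hwx : gD (l.dropLast ++ [gD l 0]) idx = x idx := by
            rw [gD_append, hπlen]
            split
            · rename_i h
              rw [hx1 idx (by omega)]
              exact prefix_gD (List.dropLast_prefix l) (by omega)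
            · rename_i h
              push_neg at h
              have hidxe : idx = L - 1 := by omega
              rw [hidxe, Nat.sub_self, hx2 (L - 1) (by omega), Nat.sub_self,
                Nat.zero_mod]
              rfl
          have hxrot : x (j + idx) = gD (l.rotate r) idx := by
            rw [hx2 (j + idx) (by omega), gD_rotate l r idx (by omega) (by omega)]
            congr 1
            have he : j + idx - (L - 1) = t' + idx := by omega
            rw [he, hr, ← hL, Nat.mod_add_mod]
          rw [hwx, hQx idx (by omega), ← hmz' idx (by omega), hxrot]
      have hcc := congrArg (fun w => List.count c w) hwin
      simp only [List.count_append] at hcc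
      have hs0 : List.count c [gD l 0] = 0 := count_single_ne hheadne
      have hrotc : List.count c l = List.count c (l.rotate r) :=
        (rotate_isRot l r).perm.count_eq c
      have hdlc : List.count c l = List.count c l.dropLast + 1 := by
        conv_lhs => rw [← List.dropLast_append_getLast hlne]
        rw [List.count_append]
        have hgl : l.getLast hlne = c := by
          rw [List.getLast_eq_getElem, hc, gD_eq _ (by omega)]
          congr 1
          omega
        rw [hgl, count_single_eq]
      omega

lemma mapInf_spec (f : Bool → List Bool) (hf : NonErasing f) (x : ℕ → Bool)
    (w : List Bool) (hw : ∀ i, i < w.length → x i = gD w i) (n : ℕ)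
    (hn : n + 1 ≤ w.length) : mapInf f x n = gD (applyF f w) n := by
  unfold mapInf
  set w1 := List.ofFn (fun i : Fin (n + 1) => x i) with hw1
  have hw1len : w1.length = n + 1 := by rw [hw1, List.length_ofFn]
  have hw1take : w1 = w.take (n + 1) := by
    apply ext_gD
    · rw [hw1len, List.length_take]; omega
    · intro i hi
      rw [hw1len] at hi
      have h1 : gD w1 i = x i := by
        rw [gD_eq _ (by omega)]
        show (List.ofFn fun i : Fin (n + 1) => x i)[i]'(by simpa [hw1] using hi) = x i
        rw [List.getElem_ofFn]
      rw [h1, gD_take _ _ _ (by omega) (by omega)]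
      exact hw i (by omega)
  have hlen1 : n < (applyF f w1).length := by
    have := length_applyF_ge f hf w1
    omega
  have hsplit : applyF f w = applyF f w1 ++ applyF f (w.drop (n + 1)) := by
    rw [hw1take, ← applyF_append_s15, List.take_append_drop]
  rw [hsplit, gD_append, if_pos hlen1, gD_eq _ hlen1]
  rw [List.getD_eq_getElem _ _ hlen1]

/-- image of the infinite witness is quasiperiodic -/
lemma x_img_QP (f : Bool → List Bool) (hf : NonErasing f) (l V : List Bool) (k : ℕ)
    (hk : 2 ≤ k) (hV : V ≠ []) (himg : applyF f l = wpow V k) (h2 : 2 ≤ l.length)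
    (hlenP : V.length ≤ (applyF f l.dropLast).length) :
    InfQuasiperiodic (mapInf f (ultPer l.dropLast l false)) := by
  have hVp : 0 < V.length := List.length_pos_iff.mpr hV
  have hlne : l ≠ [] := by intro h; rw [h] at h2; simp at h2
  have hπlen : l.dropLast.length = l.length - 1 := List.length_dropLast
  set x := ultPer l.dropLast l false with hx
  clear_value x
  set P := applyF f l.dropLast with hP
  clear_value P
  set T := P.length with hT
  clear_value T
  have hTV : V.length ≤ T := hlenP
  have hpre : P <+: wpow V k := by
    rw [hP, ← himg]
    exact applyF_prefix f (List.dropLast_prefix l)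
  have hTle : T ≤ k * V.length := by
    have := hpre.length_le
    rw [← hT] at this
    simpa using this
  have hPV : ∀ t, t < T → gD P t = gD V (t % V.length) := by
    intro t ht
    rw [prefix_gD hpre (by omega), wpow_gD _ _ _ hV (by omega)]
  -- the spec of the image word
  have hy : ∀ n, mapInf f x n =
      if n < T then gD P n else gD V ((n - T) % V.length) := by
    intro n
    set w := l.dropLast ++ wpow l (n + 1) with hw
    have hmul : n + 1 ≤ (n + 1) * l.length := by
      calc n + 1 = (n + 1) * 1 := by ring
        _ ≤ (n + 1) * l.length := Nat.mul_le_mul_left _ (by omega)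
    have hwlen : w.length = (l.length - 1) + (n + 1) * l.length := by
      rw [hw, List.length_append, hπlen, length_wpow]
    have hmatch : ∀ i, i < w.length → x i = gD w i := by
      intro i hi
      rw [hw, gD_append, hπlen]
      split
      · rename_i h
        rw [hx, ultPer_lt l (by omega)]
        exact (prefix_gD (List.dropLast_prefix l) (by omega)).symm
      · rename_i h
        push_neg at h
        rw [hx, ultPer_ge l hlne (by omega)]
        rw [wpow_gD _ _ _ hlne (by rw [hwlen] at hi; omega)]
    have hspec := mapInf_spec f hf x w hmatch n (by rw [hwlen]; omega)
    have himgw : applyF f w = P ++ wpow V (k * (n + 1)) := by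
      rw [hw, applyF_append_s15, applyF_wpow, himg, wpow_wpow, hP]
    rw [hspec, himgw, gD_append, ← hT]
    have hTbound : n < T + (k * (n + 1)) * V.length := by
      have h1 := length_applyF_ge f hf w
      have h2' : (applyF f w).length = T + (k * (n + 1)) * V.length := by
        rw [himgw, List.length_append, length_wpow, hT]
      rw [hwlen] at h1
      omega
    split
    · rfl
    · rename_i h
      push_neg at h
      rw [wpow_gD _ _ _ hV (by omega)]
  -- quasiperiod P
  refine ⟨P, ?_, ?_⟩
  · rw [hP]
    apply applyF_ne_nil f hf
    intro hdl
    have := congrArg List.length hdl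
    rw [hπlen] at this
    simp at this
    omega
  intro i0
  rcases Nat.lt_or_ge i0 T with hi0 | hi0
  · refine ⟨0, by omega, by rw [← hT]; omega, ?_⟩
    intro t ht
    rw [get_gD, Nat.zero_add, hy t, if_pos (by rw [← hT] at ht; exact ht)]
  · set s := (i0 - T) / V.length with hs
    clear_value s
    have hdm : s * V.length + (i0 - T) % V.length = i0 - T := by
      rw [hs, Nat.mul_comm]
      exact Nat.div_add_mod _ _
    have hmlt : (i0 - T) % V.length < V.length := Nat.mod_lt _ hVp
    refine ⟨T + s * V.length, by omega, by rw [← hT]; omega, ?_⟩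
    intro t ht
    rw [← hT] at ht
    rw [get_gD, hy, if_neg (by omega)]
    have he : T + s * V.length + t - T = s * V.length + t := by omega
    rw [he, Nat.add_comm (s * V.length) t, Nat.add_mul_mod_self_right]
    exact (hPV t ht).symm

lemma rot_img (f : Bool → List Bool) {u l : List Bool} {V : List Bool} {k : ℕ}
    (hk : 2 ≤ k) (hu : 0 < u.length) (hrot : u ~r l)
    (himg : applyF f u = wpow V k) :
    ∃ V', applyF f l = wpow V' k ∧ V'.length = V.length := by
  obtain ⟨n, hn⟩ := hrot
  have hl : l = u.drop (n % u.length) ++ u.take (n % u.length) := by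
    rw [← List.rotate_eq_drop_append_take (le_of_lt (Nat.mod_lt _ hu)), List.rotate_mod,
      hn]
  have hsplit : applyF f (u.take (n % u.length)) ++ applyF f (u.drop (n % u.length))
      = wpow V k := by
    rw [← applyF_append_s15, List.take_append_drop, himg]
  obtain ⟨V', hV', hV'len⟩ := rot_pow _ _ _ _ hk hsplit
  refine ⟨V', ?_, hV'len⟩
  rw [hl, applyF_append_s15, hV']


theorem stmt15 (f : Bool → List Bool) (hf : NonErasing f) (u : List Bool)
    (hu : Primitive u) (ha : 1 ≤ u.count true) (hb : 1 ≤ u.count false)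
    (h : ¬ Primitive (applyF f u)) :
    WeaklyQPFin f ∧ WeaklyQPInf f := by
  have hune : u ≠ [] := by
    intro hh
    rw [hh] at ha
    simp at ha
  have hupos : 0 < u.length := List.length_pos_iff.mpr hune
  obtain ⟨V, k, hk, hfu⟩ := not_not.mp h
  have hV : V ≠ [] := by
    intro hVe
    apply applyF_ne_nil f hf hune
    rw [hfu, hVe]
    have : (wpow ([] : List Bool) k).length = 0 := by simp
    exact List.length_eq_zero_iff.mp this
  have hVp : 0 < V.length := List.length_pos_iff.mpr hV
  constructor
  · -- finite case
    obtain ⟨l, hrot, hunb, hl2, hh, hlast⟩ :=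
      exists_unbordered_ending u hu (by omega) (by omega) true
    obtain ⟨V1, himgl, hV1len⟩ := rot_img f hk hupos hrot hfu
    have hV1 : V1 ≠ [] := List.length_pos_iff.mp (by omega)
    exact ⟨l ++ [gD l 0], nonQP_unb l hunb hl2,
      finite_witness_QP f l V1 k hk hV1 himgl hl2⟩
  · -- infinite case
    have hulen : (applyF f u).length = k * V.length := by
      rw [hfu, length_wpow]
    have hcnt := length_applyF_count f u
    have hft : (f true).length ≤ u.count true * (f true).length :=
      Nat.le_mul_of_pos_left _ (by omega)
    have hff : (f false).length ≤ u.count false * (f false).length :=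
      Nat.le_mul_of_pos_left _ (by omega)
    have hsum : (f true).length + (f false).length ≤ k * V.length := by omega
    have hk1 : (k - 1) * V.length + V.length = k * V.length := by
      have hsucc := Nat.succ_mul (k - 1) V.length
      rw [show (k - 1).succ = k by omega] at hsucc
      omega
    have hVk1 : V.length ≤ (k - 1) * V.length :=
      Nat.le_mul_of_pos_left _ (by omega)
    obtain ⟨c, hcle⟩ : ∃ c : Bool, (f c).length ≤ (k - 1) * V.length := by
      rcases le_or_gt (f true).length ((k - 1) * V.length) with hc | hc
      · exact ⟨true, hc⟩
      · exact ⟨false, by omega⟩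
    obtain ⟨l, hrot, hunb, hl2, hh, hlast⟩ :=
      exists_unbordered_ending u hu (by omega) (by omega) c
    obtain ⟨V1, himgl, hV1len⟩ := rot_img f hk hupos hrot hfu
    have hV1 : V1 ≠ [] := List.length_pos_iff.mp (by omega)
    have hlne : l ≠ [] := by
      intro hle
      rw [hle] at hl2
      simp at hl2
    have hlenP : V1.length ≤ (applyF f l.dropLast).length := by
      have hdec : l.dropLast ++ [l.getLast hlne] = l := List.dropLast_append_getLast hlne
      have hglc : l.getLast hlne = c := by
        rw [List.getLast_eq_getElem, ← gD_eq _ (by omega)]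
        exact hlast
      have hlenl : (applyF f l).length = k * V.length := by
        rw [himgl, length_wpow, hV1len]
      have hsplit2 : (applyF f l).length
          = (applyF f l.dropLast).length + (f c).length := by
        conv_lhs => rw [← hdec]
        rw [applyF_append_s15, List.length_append, hglc]
        congr 1
        show (applyF f [c]).length = (f c).length
        simp [applyF]
      omega
    exact ⟨ultPer l.dropLast l false, x_nonQP l hunb hl2,
      x_img_QP f hf l V1 k hk hV1 himgl hl2 hlenP⟩


end QPm
end
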